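/- Let α < ω₁ and let C be a Suslin scheme on X ⊆ Y satisfying A(C̄^Y) = X. Then: (i) for even α, R_α(C,Y)∖X = { y ∈ Y∖X : D_iie^{α'}(S_C(y)) ≠ ∅ }; (ii) for odd α, R_α(C,Y)∖X = { y ∈ Y∖X : D_iie^{α'}(S_C(y)) strictly contains {∅} }; (iii) moreover, for any i ∈ ω and odd α, R_{T^c_{α,i}}(C,Y)∖X = { y ∈ Y∖X : D_iie^{α'}(S_C(y)) contains a sequence of length i }, where T^c_{α,i} := {∅} ∪ i⌢T_{α'}. -/

import Mathlib

noncomputable section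
open Classical Set Topology Filter Ordinal

universe u v

namespace FBorelPaper

/-! ### Ordinal parity -/

/-- The first uncountable ordinal. -/
def omega1 : Ordinal.{0} := Ordinal.omega 1

/-- An ordinal `a = λ + m` (with `λ` limit or zero, `m < ω`) is *even* iff `m` is even. -/
def EvenOrd (a : Ordinal.{0}) : Prop := a % 2 = 0

/-- An ordinal `a = λ + m` (with `λ` limit or zero, `m < ω`) is *odd* iff `m` is odd. -/
def OddOrd (a : Ordinal.{0}) : Prop := a % 2 = 1

/-- For `a = λ + 2n + i` (with `λ` limit or zero, `n < ω`, `i ∈ {0,1}`),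
`ordPrime a = λ + n` (the ordinal `α'` of the paper). -/
def ordPrime (a : Ordinal.{0}) : Ordinal.{0} :=
  Ordinal.omega0 * (a / Ordinal.omega0) + (a % Ordinal.omega0) / 2

/-! ### The F-Borel hierarchy -/

/-- The `F`-Borel hierarchy of a topological space: `FBorel Y 0` is the family of closed
sets, and for `0 < a`, `FBorel Y a` consists of all countable unions (for odd `a`),
resp. countable intersections (for even `a`), of members of `⋃ b < a, FBorel Y b`. -/
def FBorel (Y : Type u) [TopologicalSpace Y] : Ordinal.{0} → Set (Set Y) :=
  WellFounded.fix Ordinal.lt_wf (C := fun _ => Set (Set Y)) fun a ih =>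
    if a = 0 then { F | IsClosed F }
    else if EvenOrd a then
      { S | ∃ f : ℕ → Set Y, (∀ n, ∃ b, ∃ h : b < a, f n ∈ ih b h) ∧ S = ⋂ n, f n }
    else
      { S | ∃ f : ℕ → Set Y, (∀ n, ∃ b, ∃ h : b < a, f n ∈ ih b h) ∧ S = ⋃ n, f n }

/-- The list `(σ 0, …, σ (k-1))` of the first `k` values of `σ : ℕ → ℕ`. -/
def seqPrefix (σ : ℕ → ℕ) (k : ℕ) : List ℕ := List.ofFn fun i : Fin k => σ i

/-- A Suslin scheme: a monotone family of sets indexed by finite sequences. -/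
def IsSuslinScheme {Y : Type u} (C : List ℕ → Set Y) : Prop :=
  ∀ ⦃s t : List ℕ⦄, s <+: t → C t ⊆ C s

/-- The Suslin operation `A(C) = ⋃_{σ ∈ ω^ω} ⋂_k C(σ|k)`. -/
def suslinOp {Y : Type u} (C : List ℕ → Set Y) : Set Y :=
  ⋃ σ : ℕ → ℕ, ⋂ k : ℕ, C (seqPrefix σ k)

/-- The Suslin-F subsets of `Y`: results of the Suslin operation applied to schemes of
closed sets. -/
def SuslinF (Y : Type u) [TopologicalSpace Y] : Set (Set Y) :=
  { S | ∃ C : List ℕ → Set Y, (∀ s, IsClosed (C s)) ∧ S = suslinOp C }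

/-- The classes `F_a(Y)` for `a ≤ ω₁`, where `F_{ω₁}(Y)` is the class of Suslin-F sets. -/
def FClass (Y : Type u) [TopologicalSpace Y] (a : Ordinal.{0}) : Set (Set Y) :=
  if a < omega1 then FBorel Y a else SuslinF Y

/-- `ComplIn Y X` is the complexity of `X` in `Y`: the least `a ≤ ω₁` with `X ∈ F_a(Y)`. -/
def ComplIn (Y : Type u) [TopologicalSpace Y] (X : Set Y) : Ordinal.{0} :=
  sInf { a : Ordinal.{0} | a ≤ omega1 ∧ X ∈ FClass Y a }

/-! ### Compactifications, K-analytic spaces, local complexity -/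

/-- `(K, e)` is a compactification of `X`: `K` is compact Hausdorff and `e` is a dense
embedding of `X` into `K`. -/
def IsCompactification (X : Type u) [TopologicalSpace X] (K : Type u) [TopologicalSpace K]
    (e : X → K) : Prop :=
  CompactSpace K ∧ T2Space K ∧ IsEmbedding e ∧ DenseRange e

/-- The set `Compl(X)` of all complexities attained by `X` in its compactifications. -/
def AttainedCompl (X : Type u) [TopologicalSpace X] : Set Ordinal.{0} :=
  { γ | ∃ (K : Type u) (_ : TopologicalSpace K) (e : X → K),
      IsCompactification X K e ∧ Set.range e ∈ SuslinF K ∧ γ = ComplIn K (Set.range e) }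

/-- A topological space is K-analytic iff it embeds as a Suslin-F subset of some compact
Hausdorff space. -/
def IsKAnalytic (X : Type u) [TopologicalSpace X] : Prop :=
  ∃ (K : Type u) (_ : TopologicalSpace K) (e : X → K),
    CompactSpace K ∧ T2Space K ∧ IsEmbedding e ∧ Set.range e ∈ SuslinF K

/-- The local complexity `Compl_y(X, Y)`: the least complexity of `cl(U) ∩ X` in `Y` over
all open neighborhoods `U` of `y` in `Y`. -/
def locComplAt (Y : Type u) [TopologicalSpace Y] (X : Set Y) (y : Y) : Ordinal.{0} :=
  sInf { γ : Ordinal.{0} | ∃ U : Set Y, IsOpen U ∧ y ∈ U ∧ γ = ComplIn Y (closure U ∩ X) }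

/-- The local complexity `Compl_loc(X, Y) = sup_{x ∈ X} Compl_x(X, Y)`. -/
def locCompl (Y : Type u) [TopologicalSpace Y] (X : Set Y) : Ordinal.{0} :=
  ⨆ x : X, locComplAt Y X (x : Y)

/-- The local complexity `Compl_locbar(X, Y) = sup_{y ∈ Y} Compl_y(X, Y)`. -/
def locComplBar (Y : Type u) [TopologicalSpace Y] (X : Set Y) : Ordinal.{0} :=
  ⨆ y : Y, locComplAt Y X y

/-! ### Trees on ω -/

/-- A tree on `ω`: a set of finite sequences closed under initial segments. -/
def IsTree (T : Set (List ℕ)) : Prop := ∀ ⦃s t : List ℕ⦄, s <+: t → t ∈ T → s ∈ T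

/-- A tree is well-founded iff it carries no infinite branch. -/
def WellFoundedTree (T : Set (List ℕ)) : Prop := ¬ ∃ σ : ℕ → ℕ, ∀ k : ℕ, seqPrefix σ k ∈ T

/-- `t` is a leaf of `T`: it belongs to `T` and has no immediate successor in `T`. -/
def IsLeafOf (T : Set (List ℕ)) (t : List ℕ) : Prop := t ∈ T ∧ ∀ n : ℕ, t ++ [n] ∉ T

/-- The tree `T^t = {s | t⌢s ∈ T}` corresponding to `t` in `T`. -/
def subtreeAt (T : Set (List ℕ)) (t : List ℕ) : Set (List ℕ) := { s | t ++ s ∈ T }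

/-- The smallest tree containing a set `S` of finite sequences. -/
def clTr (S : Set (List ℕ)) : Set (List ℕ) := { u | ∃ s ∈ S, u <+: s }

/-- The leaf derivative: keep the elements having some proper extension in `T`. -/
def leafDeriv (T : Set (List ℕ)) : Set (List ℕ) := { t ∈ T | ∃ s ∈ T, t <+: s ∧ t ≠ s }

/-- The derivative `D_iie`: keep the `t ∈ T` admitting infinitely many pairwise
incomparable extensions in `T` of pairwise different lengths. -/
def Diie (T : Set (List ℕ)) : Set (List ℕ) :=
  { t ∈ T | ∃ g : ℕ → List ℕ, (∀ n, g n ∈ T ∧ t <+: g n) ∧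
      ∀ ⦃m n : ℕ⦄, m < n →
        (¬ g m <+: g n) ∧ (¬ g n <+: g m) ∧ (g m).length ≠ (g n).length }

/-- Transfinitely iterated derivative, starting from `cl_Tr S` and taking intersections
at limit stages. -/
def iterDeriv (D : Set (List ℕ) → Set (List ℕ)) (S : Set (List ℕ)) (γ : Ordinal.{0}) :
    Set (List ℕ) :=
  Ordinal.limitRecOn γ (clTr S) (fun _ ih => D ih)
    (fun a _ ih => ⋂ b : Ordinal.{0}, ⋂ h : b < a, ih b h)

/-- The rank associated with the leaf derivative: the least `γ` such that the `(γ+1)`-st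
iterated leaf derivative is empty, and `ω₁` if there is no such countable ordinal. -/
def leafRank (T : Set (List ℕ)) : Ordinal.{0} :=
  if ∃ γ : Ordinal.{0}, γ < omega1 ∧ iterDeriv leafDeriv T (γ + 1) = ∅ then
    sInf { γ : Ordinal.{0} | iterDeriv leafDeriv T (γ + 1) = ∅ }
  else omega1

/-- `E` is the canonical extension of the `l(T)`-scheme `H` to the whole of `T`:
it agrees with `H` on the leaves of `T`, and at a non-leaf `t ∈ T` it is the union
(resp. the intersection) of its values at the immediate successors of `t` in `T` when
the leaf-rank of `T^t` is odd (resp. even). -/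
def IsSchemeExtension (Y : Type u) [TopologicalSpace Y] (T : Set (List ℕ))
    (H E : List ℕ → Set Y) : Prop :=
  (∀ t, IsLeafOf T t → E t = H t) ∧
  (∀ t ∈ T, ¬ IsLeafOf T t → OddOrd (leafRank (subtreeAt T t)) →
      E t = ⋃ n ∈ { n : ℕ | t ++ [n] ∈ T }, E (t ++ [n])) ∧
  (∀ t ∈ T, ¬ IsLeafOf T t → EvenOrd (leafRank (subtreeAt T t)) →
      E t = ⋂ n ∈ { n : ℕ | t ++ [n] ∈ T }, E (t ++ [n]))

/-- `H` (an `l(T)`-scheme of subsets of `X`) is a *universal simple `F_α`-representation*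
of `X`: `r_l(T) ≤ α`, and for every space `Y` containing (a copy of) `X`, the extension
of the scheme of closures `(cl_Y (H t))_t` computes `X` at the root. -/
def HasUniversalSimpleRep (X : Type u) [TopologicalSpace X] (α : Ordinal.{0}) : Prop :=
  ∃ (T : Set (List ℕ)) (H : List ℕ → Set X), IsTree T ∧ WellFoundedTree T ∧ [] ∈ T ∧
    leafRank T ≤ α ∧
    ∀ (Y : Type u) (_ : TopologicalSpace Y) (e : X → Y), IsEmbedding e →
      ∃ E : List ℕ → Set Y,
        IsSchemeExtension Y T (fun t => closure (e '' H t)) E ∧ E [] = Set.range e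

/-! ### Canonical trees -/

/-- Auxiliary indices for the canonical trees: at a successor `a = b + 1` every index is
`b`, and at a countable limit the indices enumerate all ordinals `< a` injectively. -/
def canonIdx (a : Ordinal.{0}) (n : ℕ) : Ordinal.{0} :=
  if hs : ∃ b, a = b + 1 then hs.choose
  else if hf : ∃ f : ℕ → Ordinal.{0}, Function.Injective f ∧ Set.range f = Set.Iio a then
    hf.choose n
  else 0

theorem canonIdx_lt {a : Ordinal.{0}} (h0 : a ≠ 0) (n : ℕ) : canonIdx a n < a := by
  unfold canonIdx
  split
  · next hs =>
      conv_rhs => rw [hs.choose_spec]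
      rw [Ordinal.add_one_eq_succ]
      exact Order.lt_succ _
  · split
    · next hf =>
        have hmem : hf.choose n ∈ Set.range hf.choose := Set.mem_range_self n
        rw [hf.choose_spec.2] at hmem
        exact hmem
    · exact pos_iff_ne_zero.mpr h0

/-- The canonical "maximal" trees `T_α` of leaf-rank `α < ω₁` (with `T_α = ω^{<ω}` for
`α ≥ ω₁`): `T_0 = {∅}`, `T_{α+1} = {∅} ∪ ⋃_n n⌢T_α`, and at countable limits
`T_α = {∅} ∪ ⋃_n n⌢T_{π_α(n)}` for an injective enumeration `π_α` of `α`. -/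
def canonTree : Ordinal.{0} → Set (List ℕ) :=
  WellFounded.fix Ordinal.lt_wf (C := fun _ => Set (List ℕ)) fun a ih =>
    if h0 : a = 0 then {([] : List ℕ)}
    else if omega1 ≤ a then Set.univ
    else {([] : List ℕ)} ∪ ⋃ n : ℕ, (List.cons n) '' ih (canonIdx a n) (canonIdx_lt h0 n)

/-- The canonical trees `T^c_α`: `T_{α'}` for even `α`, and `{∅} ∪ 1⌢T_{α'}` for odd `α`. -/
def canonTreeC (a : Ordinal.{0}) : Set (List ℕ) :=
  if EvenOrd a then canonTree (ordPrime a)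
  else {([] : List ℕ)} ∪ (List.cons 1) '' canonTree (ordPrime a)

/-- The canonical trees `T^c_{α,i} = {∅} ∪ i⌢T_{α'}` (for odd `α`). -/
def canonTreeCi (a : Ordinal.{0}) (i : ℕ) : Set (List ℕ) :=
  {([] : List ℕ)} ∪ (List.cons i) '' canonTree (ordPrime a)

/-! ### Admissible maps, `R_T` and regular representations -/

/-- An admissible map on a tree `T`: monotone w.r.t. extension, with
`|φ(t)| = t(0) + ⋯ + t(|t|-1)` for all `t ∈ T`. -/
def Admissible (T : Set (List ℕ)) (φ : List ℕ → List ℕ) : Prop :=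
  (∀ ⦃s t : List ℕ⦄, s ∈ T → t ∈ T → s <+: t → φ s <+: φ t) ∧
  (∀ t ∈ T, (φ t).length = t.sum)

/-- `R_T(C)`: the points of `C(∅)` admitting an admissible witness map along `T`. -/
def RT {Y : Type u} (T : Set (List ℕ)) (C : List ℕ → Set Y) : Set Y :=
  { x | x ∈ C [] ∧ ∃ φ : List ℕ → List ℕ, Admissible T φ ∧ ∀ t ∈ T, x ∈ C (φ t) }

/-- `R_α(C) = R_{T^c_α}(C)`. -/
def Ralpha {Y : Type u} (a : Ordinal.{0}) (C : List ℕ → Set Y) : Set Y :=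
  RT (canonTreeC a) C

/-- A Suslin scheme `C` of subsets of `X ⊆ Y` is *complete on `X`*: it is a Suslin scheme
on `X` (it consists of subsets of `X` and the Suslin operation applied to it covers `X`)
such that every nontrivial filter containing, for each `n`, a set `C s` with `|s| = n`,
has an accumulation point in `X`. -/
def IsCompleteOn (Y : Type u) [TopologicalSpace Y] (X : Set Y) (C : List ℕ → Set Y) :
    Prop :=
  IsSuslinScheme C ∧ (∀ s, C s ⊆ X) ∧ X ⊆ suslinOp C ∧
  ∀ F : Filter Y, F.NeBot → (∀ n : ℕ, ∃ s : List ℕ, s.length = n ∧ C s ∈ F) →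
    ∃ x ∈ X, ClusterPt x F

/-- The tree `S_C(y)` of finite sequences `s` with `y ∈ cl_Y (C s)`. -/
def SCtree (Y : Type u) [TopologicalSpace Y] (C : List ℕ → Set Y) (y : Y) :
    Set (List ℕ) :=
  { s : List ℕ | y ∈ closure (C s) }

/-! ### Zoom spaces -/

/-- The set of isolated points of a topological space. -/
def IsolPts (Y : Type u) [TopologicalSpace Y] : Set Y := { y | IsOpen ({y} : Set Y) }

/-- The underlying set of the zoom space `Z(Y, X)`: the non-isolated points of `Y`
together with the disjoint union of the spaces `X i`, `i ∈ I_Y`. -/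
def ZoomCarrier (Y : Type u) [TopologicalSpace Y] (X : IsolPts Y → Type v) :
    Type (max u v) :=
  ({ y : Y // y ∉ IsolPts Y }) ⊕ ((i : IsolPts Y) × X i)

/-- The basic set `V_U ⊆ Z(Y, X)` associated with `U ⊆ Y`:
`V_U = (U ∖ I_Y) ∪ ⋃ {X i | i ∈ U ∩ I_Y}`. -/
def zoomVSet (Y : Type u) [TopologicalSpace Y] (X : IsolPts Y → Type v) (U : Set Y) :
    Set (ZoomCarrier Y X) :=
  { z | Sum.elim (fun y : { y : Y // y ∉ IsolPts Y } => (y : Y) ∈ U)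
      (fun p : (i : IsolPts Y) × X i => (p.1 : Y) ∈ U) z }

/-- The topology of the zoom space `Z(Y, X)`, generated by the open subsets of the
spaces `X i` together with the sets `V_U` for `U` open in `Y`. -/
instance zoomTopology (Y : Type u) [TopologicalSpace Y] (X : IsolPts Y → Type v)
    [∀ i, TopologicalSpace (X i)] : TopologicalSpace (ZoomCarrier Y X) :=
  TopologicalSpace.generateFrom
    ({ B | ∃ (i : IsolPts Y) (W : Set (X i)), IsOpen W ∧
        B = Sum.inr '' ((Sigma.mk i) '' W) } ∪
     { B | ∃ U : Set Y, IsOpen U ∧ B = zoomVSet Y X U })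

/-- The subset of `Z(Y, X)` which is the underlying set of the zoom space `Z(Ys, A)` of
a subspace `Ys ⊆ Y` with respect to subspaces `A i ⊆ X i`
(here the isolated points of `Ys` are identified with those of `Y`). -/
def zoomSub (Y : Type u) [TopologicalSpace Y] (X : IsolPts Y → Type v) (Ys : Set Y)
    (A : ∀ i : IsolPts Y, Set (X i)) : Set (ZoomCarrier Y X) :=
  { z | Sum.elim (fun y : { y : Y // y ∉ IsolPts Y } => (y : Y) ∈ Ys)
      (fun p : (i : IsolPts Y) × X i => p.2 ∈ A p.1) z }

/-! ### Broom sets and broom spaces -/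

/-- A forking sequence: a sequence of nonempty finite sequences with pairwise distinct
first entries. -/
def IsForking (f : ℕ → List ℕ) : Prop :=
  (∀ n, f n ≠ []) ∧ ∀ ⦃m n : ℕ⦄, m ≠ n → (f m).head? ≠ (f n).head?

/-- The hierarchy of finite broom sets: `B ∈ B_α` iff `IsBroomB α B`.
`B_0 = {{∅}}`; for odd `α`, `B_α = B_{<α} ∪ {h⌢B | B ∈ B_{α-1}, h ∈ ω^{<ω}}`; for even
`α > 0`, `B_α = B_{<α} ∪ {⋃_n f_n⌢B_n | B_n ∈ B_{<α}, (f_n) a forking sequence}`. -/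
inductive IsBroomB : Ordinal.{0} → Set (List ℕ) → Prop
  | base : IsBroomB 0 {[]}
  | mono {β α : Ordinal.{0}} {B : Set (List ℕ)} : β < α → IsBroomB β B → IsBroomB α B
  | odd {β : Ordinal.{0}} {B : Set (List ℕ)} (h : List ℕ) : EvenOrd β → IsBroomB β B →
      IsBroomB (β + 1) ((fun s => h ++ s) '' B)
  | even {α : Ordinal.{0}} {f : ℕ → List ℕ} {Bs : ℕ → Set (List ℕ)}
      (g : ℕ → Ordinal.{0}) :
      0 < α → EvenOrd α → IsForking f →
      (∀ n : ℕ, g n < α) → (∀ n : ℕ, IsBroomB (g n) (Bs n)) →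
      IsBroomB α (⋃ n : ℕ, (fun s => f n ++ s) '' Bs n)

/-- The infinite sequence `s⌢ν` obtained by extending the finite sequence `s` by `ν`. -/
def seqAppend (s : List ℕ) (ν : ℕ → ℕ) : ℕ → ℕ :=
  fun k => if h : k < s.length then s.get ⟨k, h⟩ else ν (k - s.length)

/-- `A` is a broom-extension of `B`:
`A = {s⌢f^s_n⌢ν^s_n | s ∈ B, n ∈ ω}` for forking sequences `(f^s_n)_n, s ∈ B`, and
points `ν^s_n ∈ ω^ω`. -/
def IsBroomExtension (B : Set (List ℕ)) (A : Set (ℕ → ℕ)) : Prop :=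
  ∃ (f : List ℕ → ℕ → List ℕ) (ν : List ℕ → ℕ → (ℕ → ℕ)),
    (∀ s ∈ B, IsForking (f s)) ∧
    A = { σ : ℕ → ℕ | ∃ s ∈ B, ∃ n : ℕ, σ = seqAppend (s ++ f s n) (ν s n) }

/-- The hierarchy of infinite broom sets: `A ∈ A_α` iff `A` is a broom-extension of some
`B ∈ B_α`. -/
def IsBroomA (α : Ordinal.{0}) (A : Set (ℕ → ℕ)) : Prop :=
  ∃ B : Set (List ℕ), IsBroomB α B ∧ IsBroomExtension B A

/-- `u` is a finite initial segment of the infinite sequence `σ`. -/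
def InfExtends (u : List ℕ) (σ : ℕ → ℕ) : Prop := seqPrefix σ u.length = u

/-- The tree of all finite initial segments of members of a set of infinite sequences. -/
def clTrInf (S : Set (ℕ → ℕ)) : Set (List ℕ) := { u | ∃ σ ∈ S, InfExtends u σ }

/-- The broom space `T_𝒜` on `ω^ω ∪ {∞}` (with `∞ = none`): every point of `ω^ω` is
isolated, and the neighborhood subbasis at `∞` consists of the complements of single
points of `ω^ω` and of the complements of the sets `A ∈ 𝒜`. -/
def broomTop (𝒜 : Set (Set (ℕ → ℕ))) : TopologicalSpace (Option (ℕ → ℕ)) :=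
  TopologicalSpace.generateFrom
    ({ S | ∃ σ : ℕ → ℕ, S = {Option.some σ} } ∪
     { S | ∃ σ : ℕ → ℕ, S = insert Option.none (Option.some '' ({σ}ᶜ)) } ∪
     { S | ∃ A ∈ 𝒜, S = insert Option.none (Option.some '' Aᶜ) })



section Aux


lemma iterDeriv_zero (D : Set (List ℕ) → Set (List ℕ)) (S : Set (List ℕ)) :
    iterDeriv D S 0 = clTr S := Ordinal.limitRecOn_zero _ _ _

lemma iterDeriv_succ (D : Set (List ℕ) → Set (List ℕ)) (S : Set (List ℕ)) (b : Ordinal.{0}) :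
    iterDeriv D S (b + 1) = D (iterDeriv D S b) := by
  rw [iterDeriv, Ordinal.add_one_eq_succ, Ordinal.limitRecOn_succ]
  rfl

lemma iterDeriv_limit (D : Set (List ℕ) → Set (List ℕ)) (S : Set (List ℕ)) {a : Ordinal.{0}}
    (ha : Order.IsSuccLimit a) :
    iterDeriv D S a = ⋂ b : Ordinal.{0}, ⋂ _ : b < a, iterDeriv D S b := by
  rw [iterDeriv, Ordinal.limitRecOn_limit _ _ _ _ ha]
  rfl

lemma isTree_clTr (S : Set (List ℕ)) : IsTree (clTr S) := by
  rintro s t hst ⟨u, hu, htu⟩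
  exact ⟨u, hu, hst.trans htu⟩

lemma clTr_eq_self {S : Set (List ℕ)} (hS : IsTree S) : clTr S = S := by
  ext u
  constructor
  · rintro ⟨s, hs, hus⟩; exact hS hus hs
  · intro hu; exact ⟨u, hu, List.prefix_rfl⟩

lemma diie_subset (T : Set (List ℕ)) : Diie T ⊆ T := fun _ ht => ht.1

lemma isTree_diie {T : Set (List ℕ)} (hT : IsTree T) : IsTree (Diie T) := by
  rintro s t hst ⟨htT, g, hg1, hg2⟩
  exact ⟨hT hst htT, g, fun n => ⟨(hg1 n).1, hst.trans (hg1 n).2⟩, hg2⟩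

lemma isTree_iterDeriv {S : Set (List ℕ)} (γ : Ordinal.{0}) :
    IsTree (iterDeriv Diie S γ) ∧ iterDeriv Diie S γ ⊆ clTr S := by
  induction γ using Ordinal.induction with
  | _ γ ih =>
    rcases Ordinal.zero_or_succ_or_isSuccLimit γ with h0 | ⟨b, hb⟩ | hlim
    · subst h0; rw [iterDeriv_zero]; exact ⟨isTree_clTr S, subset_rfl⟩
    · rw [← Ordinal.add_one_eq_succ] at hb
      subst hb
      rw [iterDeriv_succ]
      have hb' : b < b + 1 := lt_add_one b
      exact ⟨isTree_diie (ih b hb').1,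
        (diie_subset _).trans (ih b hb').2⟩
    · rw [iterDeriv_limit _ _ hlim]
      constructor
      · intro s t hst ht
        simp only [Set.mem_iInter] at ht ⊢
        intro b hb
        exact (ih b hb).1 hst (ht b hb)
      · intro t ht
        simp only [Set.mem_iInter] at ht
        exact (ih 0 hlim.pos).2 (ht 0 hlim.pos)

lemma iterDeriv_antitone (S : Set (List ℕ)) : ∀ {c b : Ordinal.{0}}, b ≤ c →
    iterDeriv Diie S c ⊆ iterDeriv Diie S b := by
  intro c
  induction c using Ordinal.induction with
  | _ c ih =>
    intro b hbc
    rcases eq_or_lt_of_le hbc with rfl | hbc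
    · exact subset_rfl
    rcases Ordinal.zero_or_succ_or_isSuccLimit c with h0 | ⟨d, hd⟩ | hlim
    · subst h0; exact absurd hbc (not_lt_zero (a := b))
    · rw [← Ordinal.add_one_eq_succ] at hd
      subst hd
      rw [iterDeriv_succ]
      refine (diie_subset _).trans (ih d (lt_add_one d) ?_)
      exact Order.le_of_lt_add_one hbc
    · rw [iterDeriv_limit _ _ hlim]
      exact fun t ht => by
        simp only [Set.mem_iInter] at ht
        exact ht b hbc

lemma wf_subset {S T : Set (List ℕ)} (h : S ⊆ T) (hT : WellFoundedTree T) :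
    WellFoundedTree S := by
  rintro ⟨σ, hσ⟩
  exact hT ⟨σ, fun k => h (hσ k)⟩

/-- easy direction: from `Diie` membership, extensions of every length. -/
lemma diie_ext {T : Set (List ℕ)} (hT : IsTree T) {s : List ℕ} (hs : s ∈ Diie T) (n : ℕ) :
    ∃ t ∈ T, s <+: t ∧ t.length = s.length + n := by
  obtain ⟨hsT, g, hg1, hg2⟩ := hs
  have hinj : Function.Injective fun j => (g j).length := by
    intro i j hij
    by_contra hne
    rcases lt_or_gt_of_ne hne with h | h
    · exact (hg2 h).2.2 hij
    · exact (hg2 h).2.2 hij.symm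
  have hbig : ∃ j, s.length + n ≤ (g j).length := by
    by_contra hcon
    push_neg at hcon
    have : Function.Injective fun j => (⟨(g j).length, hcon j⟩ : Fin (s.length + n)) := by
      intro i j hij
      exact hinj (by simpa using congrArg Fin.val hij)
    obtain ⟨x, y, hxy, he⟩ := Finite.exists_ne_map_eq_of_infinite
      (fun j => (⟨(g j).length, hcon j⟩ : Fin (s.length + n)))
    exact hxy (this he)
  obtain ⟨j, hj⟩ := hbig
  refine ⟨(g j).take (s.length + n), hT (List.take_prefix _ _) (hg1 j).1, ?_, ?_⟩
  · rw [List.prefix_take_iff]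
    exact ⟨(hg1 j).2, Nat.le_add_right _ _⟩
  · simpa using hj

/-- infinite chains give branches -/
lemma not_wf_of_chain {T : Set (List ℕ)} (hT : IsTree T) (c : ℕ → List ℕ)
    (hmem : ∀ k, c k ∈ T) (hchain : ∀ k, c k <+: c (k + 1))
    (hlen : ∀ k, (c k).length < (c (k + 1)).length) : ¬ WellFoundedTree T := by
  intro hwf
  have hmono : ∀ {j k : ℕ}, j ≤ k → c j <+: c k := by
    intro j k hjk
    induction k with
    | zero => cases Nat.le_zero.mp hjk; exact List.prefix_rfl
    | succ k ih =>
      rcases Nat.lt_or_ge j (k + 1) with h | h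
      · exact (ih (Nat.lt_succ_iff.mp h)).trans (hchain k)
      · cases Nat.le_antisymm hjk h; exact List.prefix_rfl
  have hlong : ∀ k, k ≤ (c k).length := by
    intro k
    induction k with
    | zero => exact Nat.zero_le _
    | succ k ih => exact Nat.lt_of_le_of_lt ih (hlen k)
  set σ : ℕ → ℕ := fun n => (c (n + 1)).getD n 0 with hσ
  apply hwf
  refine ⟨σ, fun k => ?_⟩
  have hpref : seqPrefix σ k = (c k).take k := by
    apply List.ext_getElem
    · simp [seqPrefix, hlong k]
    · intro i h1 h2
      have hik : i < k := by simpa [seqPrefix] using h1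
      have hi1 : i < (c (i + 1)).length := Nat.lt_of_lt_of_le (Nat.lt_succ_self i) (hlong (i + 1))
      have hagree : (c (i + 1))[i] = (c k)[i]'(Nat.lt_of_lt_of_le hi1 ((hmono hik).length_le)) := by
        exact (hmono (show i + 1 ≤ k from hik)).getElem hi1
      simp only [seqPrefix, List.getElem_ofFn, List.getElem_take]
      show σ i = _
      rw [hσ]
      simp only []
      rw [List.getD_eq_getElem _ _ hi1]
      exact hagree
  rw [hpref]
  exact hT (List.take_prefix _ _) (hmem k)





lemma mem_diie_of_unbounded {T : Set (List ℕ)} (hT : IsTree T) (hwf : WellFoundedTree T)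
    {s : List ℕ} (hsT : s ∈ T)
    (h : ∀ n, ∃ t ∈ T, s <+: t ∧ t.length = s.length + n) : s ∈ Diie T := by
  classical
  -- `Unb t` : t has extensions in T of unbounded length
  set Unb : List ℕ → Prop := fun t => ∀ n : ℕ, ∃ u ∈ T, t <+: u ∧ n ≤ u.length with hUnbdef
  set M : Set (List ℕ) := { t | t ∈ T ∧ s <+: t ∧ Unb t } with hMdef
  have hsM : s ∈ M := by
    refine ⟨hsT, List.prefix_rfl, fun n => ?_⟩
    obtain ⟨t, htT, hst, hlen⟩ := h n
    exact ⟨t, htT, hst, by omega⟩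
  -- a maximal element of M
  have hmax : ∃ t ∈ M, ∀ t' ∈ M, t <+: t' → t' = t := by
    by_contra hcon
    push_neg at hcon
    have hstep : ∀ t ∈ M, ∃ t', t' ∈ M ∧ t <+: t' ∧ t' ≠ t := by
      intro t ht
      obtain ⟨t', ht', h1, h2⟩ := hcon t ht
      exact ⟨t', ht', h1, h2⟩
    -- build a chain
    let c : ℕ → { t : List ℕ // t ∈ M } := fun k =>
      Nat.rec ⟨s, hsM⟩ (fun _ p => ⟨(hstep p.1 p.2).choose, (hstep p.1 p.2).choose_spec.1⟩) k
    have hc : ∀ k, (c k).1 <+: (c (k + 1)).1 ∧ (c (k + 1)).1 ≠ (c k).1 := by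
      intro k
      exact ⟨(hstep (c k).1 (c k).2).choose_spec.2.1, (hstep (c k).1 (c k).2).choose_spec.2.2⟩
    have hlen : ∀ k, ((c k).1).length < ((c (k + 1)).1).length := by
      intro k
      rcases Nat.lt_or_ge ((c k).1).length ((c (k+1)).1).length with h | h
      · exact h
      · exfalso
        have hle := (hc k).1.length_le
        have : (c k).1 = (c (k+1)).1 := (hc k).1.eq_of_length (by omega)
        exact (hc k).2 this.symm
    exact not_wf_of_chain hT (fun k => (c k).1) (fun k => (c k).2.1)
      (fun k => (hc k).1) hlen hwf
  obtain ⟨t0, ht0M, ht0max⟩ := hmax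
  obtain ⟨ht0T, hst0, ht0Unb⟩ := ht0M
  -- bound function for proper extensions of t0
  have hbnd : ∀ w, w ∈ T → t0 <+: w → w ≠ t0 → ∃ n : ℕ, ∀ u ∈ T, w <+: u → u.length < n := by
    intro w hwT htw hwne
    by_contra hcon
    push_neg at hcon
    have hwM : w ∈ M := by
      refine ⟨hwT, hst0.trans htw, fun n => ?_⟩
      obtain ⟨u, huT, hwu, hnu⟩ := hcon n
      exact ⟨u, huT, hwu, hnu⟩
    exact hwne (ht0max w hwM htw)
  set bnd : List ℕ → ℕ := fun w =>
    if hw : ∃ n : ℕ, ∀ u ∈ T, w <+: u → u.length < n then hw.choose else 0 with hbnddef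
  have hbnd' : ∀ w, w ∈ T → t0 <+: w → w ≠ t0 → ∀ u ∈ T, w <+: u → u.length < bnd w := by
    intro w hwT htw hwne u huT hwu
    have hw := hbnd w hwT htw hwne
    rw [hbnddef]
    simp only [dif_pos hw]
    exact hw.choose_spec u huT hwu
  -- the "child" of a long extension
  set ch : List ℕ → List ℕ := fun v => v.take (t0.length + 1) with hchdef
  -- pick witnesses of unbounded length
  set q : ℕ → List ℕ := fun N => (ht0Unb N).choose with hqdef
  have hq : ∀ N, q N ∈ T ∧ t0 <+: q N ∧ N ≤ (q N).length := fun N => (ht0Unb N).choose_spec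
  -- thresholds
  set B : ℕ → ℕ := fun k => Nat.rec (t0.length + 1)
    (fun _ b => max (b + 1) (max (bnd (ch (q b)) + 1) ((q b).length + 1))) k with hBdef
  have hB0 : B 0 = t0.length + 1 := rfl
  have hBsucc : ∀ k, B (k + 1) = max (B k + 1) (max (bnd (ch (q (B k))) + 1) ((q (B k)).length + 1)) :=
    fun k => rfl
  have hBmono : ∀ {j k : ℕ}, j ≤ k → B j ≤ B k := by
    intro j k hjk
    induction k with
    | zero => cases Nat.le_zero.mp hjk; exact le_rfl
    | succ k ih =>
      rcases Nat.lt_or_ge j (k + 1) with hlt | hge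
      · refine (ih (Nat.lt_succ_iff.mp hlt)).trans ?_
        rw [hBsucc]; omega
      · cases Nat.le_antisymm hjk hge; exact le_rfl
  set g : ℕ → List ℕ := fun k => q (B k) with hgdef
  -- properties of g
  have hgT : ∀ k, g k ∈ T := fun k => (hq (B k)).1
  have hgext : ∀ k, t0 <+: g k := fun k => (hq (B k)).2.1
  have hglen : ∀ k, B k ≤ (g k).length := fun k => (hq (B k)).2.2
  have hglong : ∀ k, t0.length + 1 ≤ (g k).length := by
    intro k
    exact le_trans (le_trans (by rw [← hB0]) (hBmono (Nat.zero_le k))) (hglen k)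
  have hch : ∀ k, ch (g k) ∈ T ∧ t0 <+: ch (g k) ∧ ch (g k) ≠ t0 ∧ ch (g k) <+: g k := by
    intro k
    have hpre : ch (g k) <+: g k := List.take_prefix _ _
    have hlen : (ch (g k)).length = t0.length + 1 := by
      rw [hchdef]; simp [min_eq_left (hglong k)]
    refine ⟨hT hpre (hgT k), ?_, ?_, hpre⟩
    · rw [List.prefix_take_iff]
      exact ⟨hgext k, Nat.le_succ _⟩
    · intro heq
      have := congrArg List.length heq
      rw [hlen] at this
      omega
  -- strict growth of lengths between stages
  have hlt : ∀ {j k : ℕ}, j < k → (g j).length < (g k).length ∧ bnd (ch (g j)) < (g k).length := by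
    intro j k hjk
    have h1 : B (j + 1) ≤ B k := hBmono hjk
    have h2 : (g j).length + 1 ≤ B (j + 1) := by rw [hBsucc]; simp only [hgdef]; omega
    have h3 : bnd (ch (g j)) + 1 ≤ B (j + 1) := by rw [hBsucc]; simp only [hgdef]; omega
    exact ⟨by have := hglen k; omega, by have := hglen k; omega⟩
  -- distinct children
  have hchne : ∀ {j k : ℕ}, j < k → ch (g j) ≠ ch (g k) := by
    intro j k hjk heq
    have h1 := hbnd' (ch (g j)) (hch j).1 (hch j).2.1 (hch j).2.2.1 (g k) (hgT k)
      (by rw [heq]; exact (hch k).2.2.2)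
    exact absurd (hlt hjk).2 (by omega)
  -- incomparability
  have hincomp : ∀ {j k : ℕ}, j < k → ¬ g j <+: g k := by
    intro j k hjk hpre
    apply hchne hjk
    have h1 : ch (g j) <+: ch (g k) := by
      rw [hchdef]
      exact hpre.take _
    apply h1.eq_of_length
    rw [hchdef]
    simp [min_eq_left (hglong j), min_eq_left (hglong k)]
  refine ⟨hsT, g, fun n => ⟨hgT n, hst0.trans (hgext n)⟩, ?_⟩
  intro m n hmn
  refine ⟨hincomp hmn, ?_, by have := (hlt hmn).1; omega⟩
  intro hpre
  have := hpre.length_le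
  have := (hlt hmn).1
  omega



lemma exists_enum {a : Ordinal.{0}} (ha : Order.IsSuccLimit a) (h1 : a < omega1) :
    ∃ f : ℕ → Ordinal.{0}, Function.Injective f ∧ Set.range f = Set.Iio a := by
  have hcard : a.card ≤ Cardinal.aleph0 := by
    have := Cardinal.lt_ord.mp (show a < (Cardinal.aleph 1).ord by rwa [Cardinal.ord_aleph])
    rwa [← Cardinal.succ_aleph0, Order.lt_succ_iff] at this
  have hcnt : Countable (Set.Iio a) := by
    rw [← Cardinal.mk_le_aleph0_iff, Ordinal.mk_Iio_ordinal]
    calc Cardinal.lift.{1} a.card ≤ Cardinal.lift.{1} Cardinal.aleph0 :=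
          Cardinal.lift_le.mpr hcard
      _ = Cardinal.aleph0 := Cardinal.lift_aleph0
  have hinf : Infinite (Set.Iio a) := by
    rw [Set.infinite_coe_iff]
    apply Set.infinite_of_injective_forall_mem (f := fun n : ℕ => (n : Ordinal.{0}))
      (fun m n h => by simpa using h)
    intro n
    exact (Ordinal.natCast_lt_of_isSuccLimit ha n)
  obtain ⟨d⟩ := nonempty_denumerable_iff.mpr ⟨hcnt, hinf⟩
  have e := (Denumerable.eqv (Set.Iio a)).symm
  refine ⟨fun n => (e n : Ordinal.{0}), ?_, ?_⟩
  · intro m n h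
    exact e.injective (Subtype.ext h)
  · ext b
    simp only [Set.mem_range]
    constructor
    · rintro ⟨n, rfl⟩; exact (e n).2
    · intro hb
      exact ⟨e.symm ⟨b, hb⟩, by simp⟩

lemma canonIdx_succ (b : Ordinal.{0}) (n : ℕ) : canonIdx (b + 1) n = b := by
  have hs : ∃ c : Ordinal.{0}, b + 1 = c + 1 := ⟨b, rfl⟩
  unfold canonIdx
  rw [dif_pos hs]
  have hspec := hs.choose_spec
  have : Order.succ b = Order.succ hs.choose := by
    rw [← Ordinal.add_one_eq_succ, ← Ordinal.add_one_eq_succ]; exact hspec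
  exact (Order.succ_eq_succ_iff.mp this).symm

lemma canonIdx_limit_surj {a : Ordinal.{0}} (ha : Order.IsSuccLimit a) (h1 : a < omega1) {b : Ordinal.{0}}
    (hb : b < a) : ∃ n : ℕ, canonIdx a n = b := by
  have hns : ¬ ∃ c : Ordinal.{0}, a = c + 1 := by
    rintro ⟨c, rfl⟩
    have := ha.succ_lt (show c < c + 1 from lt_add_one c)
    rw [← Ordinal.add_one_eq_succ] at this
    exact lt_irrefl _ this
  have hf : ∃ f : ℕ → Ordinal.{0}, Function.Injective f ∧ Set.range f = Set.Iio a :=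
    exists_enum ha h1
  unfold canonIdx
  simp only [dif_neg hns, dif_pos hf]
  have : b ∈ Set.range hf.choose := by rw [hf.choose_spec.2]; exact hb
  obtain ⟨n, hn⟩ := this
  exact ⟨n, hn⟩

lemma canonTree_def (a : Ordinal.{0}) :
    canonTree a = if h0 : a = 0 then {([] : List ℕ)}
      else if omega1 ≤ a then Set.univ
      else {([] : List ℕ)} ∪ ⋃ n : ℕ, (List.cons n) '' canonTree (canonIdx a n) := by
  unfold canonTree
  rw [WellFounded.fix_eq]

lemma canonTree_zero : canonTree 0 = {([] : List ℕ)} := by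
  rw [canonTree_def]; simp

lemma canonTree_eq {a : Ordinal.{0}} (h0 : a ≠ 0) (h1 : a < omega1) :
    canonTree a = {([] : List ℕ)} ∪ ⋃ n : ℕ, (List.cons n) '' canonTree (canonIdx a n) := by
  rw [canonTree_def, dif_neg h0, if_neg (not_le.mpr h1)]

lemma nil_mem_canonTree (a : Ordinal.{0}) : ([] : List ℕ) ∈ canonTree a := by
  rw [canonTree_def]
  split
  · exact rfl
  · split
    · trivial
    · exact Or.inl rfl

lemma mem_canonTree_iff {a : Ordinal.{0}} (h0 : a ≠ 0) (h1 : a < omega1) {u : List ℕ} :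
    u ∈ canonTree a ↔ u = [] ∨ ∃ (n : ℕ) (t : List ℕ),
      t ∈ canonTree (canonIdx a n) ∧ u = n :: t := by
  rw [canonTree_eq h0 h1]
  constructor
  · rintro (h | h)
    · exact Or.inl h
    · simp only [Set.mem_iUnion, Set.mem_image] at h
      obtain ⟨n, t, ht, rfl⟩ := h
      exact Or.inr ⟨n, t, ht, rfl⟩
  · rintro (rfl | ⟨n, t, ht, rfl⟩)
    · exact Or.inl rfl
    · exact Or.inr (Set.mem_iUnion.mpr ⟨n, Set.mem_image_of_mem _ ht⟩)

lemma mem_canonTree_cons {a : Ordinal.{0}} (h0 : a ≠ 0) (h1 : a < omega1) {n : ℕ} {t : List ℕ}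
    (h : n :: t ∈ canonTree a) : t ∈ canonTree (canonIdx a n) := by
  rcases (mem_canonTree_iff h0 h1).mp h with h' | ⟨m, t', ht', he⟩
  · exact absurd h' (by simp)
  · obtain ⟨rfl, rfl⟩ : m = n ∧ t' = t := by
      have := he
      injection this.symm with h1 h2
      exact ⟨h1, h2⟩
    exact ht'


lemma diie_char {T : Set (List ℕ)} (hT : IsTree T) (hwf : WellFoundedTree T) (s : List ℕ) :
    s ∈ Diie T ↔ s ∈ T ∧ ∀ n, ∃ t ∈ T, s <+: t ∧ t.length = s.length + n := by
  constructor
  · intro hs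
    exact ⟨hs.1, fun n => diie_ext hT hs n⟩
  · rintro ⟨hsT, h⟩
    exact mem_diie_of_unbounded hT hwf hsT h

lemma add_nat_lt_limit {γ b : Ordinal.{0}} (hlim : Order.IsSuccLimit γ) (hb : b < γ) (n : ℕ) :
    b + (n : Ordinal.{0}) < γ := by
  induction n with
  | zero => simpa using hb
  | succ n ih =>
    have hc : ((n + 1 : ℕ) : Ordinal.{0}) = (n : Ordinal.{0}) + 1 := by
      exact_mod_cast Nat.cast_succ n
    rw [hc, ← add_assoc, Ordinal.add_one_eq_succ]
    exact hlim.succ_lt ih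

lemma shift_iterDeriv (S : Set (List ℕ)) :
    ∀ (n : ℕ) (b : Ordinal.{0}) (s : List ℕ),
      s ∈ iterDeriv Diie S (b + (n : Ordinal.{0})) →
      ∃ s', s <+: s' ∧ s'.length = s.length + n ∧ s' ∈ iterDeriv Diie S b := by
  intro n
  induction n with
  | zero =>
    intro b s hs
    exact ⟨s, List.prefix_rfl, by simp, by simpa using hs⟩
  | succ n ih =>
    intro b s hs
    have hc : b + ((n + 1 : ℕ) : Ordinal.{0}) = (b + 1) + (n : Ordinal.{0}) := by
      have h1 : ((n + 1 : ℕ) : Ordinal.{0}) = 1 + (n : Ordinal.{0}) := by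
        rw [Nat.add_comm]; push_cast; rfl
      rw [h1, ← add_assoc]
    rw [hc] at hs
    obtain ⟨s₁, h1, h2, h3⟩ := ih (b + 1) s hs
    rw [iterDeriv_succ] at h3
    obtain ⟨t, htD, hst, hlen⟩ := diie_ext (isTree_iterDeriv (S := S) b).1 h3 1
    exact ⟨t, h1.trans hst, by omega, htD⟩

/-- relative admissibility along `canonTree γ`, rooted at `s`. -/
def RelAdm (S : Set (List ℕ)) (γ : Ordinal.{0}) (s : List ℕ) : Prop :=
  ∃ φ : List ℕ → List ℕ,
    (∀ ⦃u v : List ℕ⦄, u ∈ canonTree γ → v ∈ canonTree γ → u <+: v → φ u <+: φ v) ∧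
    ∀ t ∈ canonTree γ, φ t ∈ S ∧ s <+: φ t ∧ (φ t).length = s.length + t.sum

lemma RelAdm.root_eq {S : Set (List ℕ)} {γ : Ordinal.{0}} {s : List ℕ}
    {φ : List ℕ → List ℕ}
    (hv : ∀ t ∈ canonTree γ, φ t ∈ S ∧ s <+: φ t ∧ (φ t).length = s.length + t.sum) :
    φ [] = s := by
  have h0 := hv [] (nil_mem_canonTree γ)
  exact ((h0.2.1).eq_of_length (by simp [h0.2.2])).symm

lemma RelAdm.mem {S : Set (List ℕ)} {γ : Ordinal.{0}} {s : List ℕ}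
    (h : RelAdm S γ s) : s ∈ S := by
  obtain ⟨φ, -, hv⟩ := h
  have := RelAdm.root_eq hv
  rw [← this]
  exact (hv [] (nil_mem_canonTree γ)).1

lemma relAdm_zero (S : Set (List ℕ)) (s : List ℕ) : RelAdm S 0 s ↔ s ∈ S := by
  constructor
  · exact fun h => h.mem
  · intro hs
    refine ⟨fun _ => s, fun u v _ _ _ => List.prefix_rfl, fun t ht => ?_⟩
    rw [canonTree_zero] at ht
    cases ht
    exact ⟨hs, List.prefix_rfl, by simp⟩

lemma relAdm_step {γ : Ordinal.{0}} (h0 : γ ≠ 0) (h1 : γ < omega1) (S : Set (List ℕ))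
    (s : List ℕ) :
    RelAdm S γ s ↔ ∀ n : ℕ, ∃ s', s <+: s' ∧ s'.length = s.length + n ∧
      RelAdm S (canonIdx γ n) s' := by
  constructor
  · rintro ⟨φ, hmono, hval⟩
    intro n
    have hnT : [n] ∈ canonTree γ :=
      (mem_canonTree_iff h0 h1).mpr (Or.inr ⟨n, [], nil_mem_canonTree _, rfl⟩)
    have hnilT : ([] : List ℕ) ∈ canonTree γ := nil_mem_canonTree γ
    have hroot : φ [] = s := RelAdm.root_eq hval
    have hlen_n : (φ [n]).length = s.length + n := by
      have := (hval [n] hnT).2.2; simpa using this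
    refine ⟨φ [n], ?_, hlen_n, ?_⟩
    · rw [← hroot]; exact hmono hnilT hnT List.nil_prefix
    · refine ⟨fun t => φ (n :: t), ?_, ?_⟩
      · intro u v hu hv huv
        exact hmono ((mem_canonTree_iff h0 h1).mpr (Or.inr ⟨n, u, hu, rfl⟩))
          ((mem_canonTree_iff h0 h1).mpr (Or.inr ⟨n, v, hv, rfl⟩))
          (List.cons_prefix_cons.mpr ⟨rfl, huv⟩)
      · intro t ht
        have htT : n :: t ∈ canonTree γ :=
          (mem_canonTree_iff h0 h1).mpr (Or.inr ⟨n, t, ht, rfl⟩)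
        refine ⟨(hval _ htT).1, ?_, ?_⟩
        · exact hmono hnT htT (List.cons_prefix_cons.mpr ⟨rfl, List.nil_prefix⟩)
        · have := (hval _ htT).2.2
          rw [this, hlen_n]
          simp [List.sum_cons]
          omega
  · intro h
    choose s' hpre hlen hrel using h
    have hrel' : ∀ n, ∃ φ : List ℕ → List ℕ,
        (∀ ⦃u v : List ℕ⦄, u ∈ canonTree (canonIdx γ n) → v ∈ canonTree (canonIdx γ n) →
          u <+: v → φ u <+: φ v) ∧
        ∀ t ∈ canonTree (canonIdx γ n), φ t ∈ S ∧ s' n <+: φ t ∧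
          (φ t).length = (s' n).length + t.sum := fun n => hrel n
    choose φ hφmono hφval using hrel'
    have hs0 : s' 0 = s := ((hpre 0).eq_of_length (by rw [hlen 0]; simp)).symm
    have hsS : s ∈ S := by rw [← hs0]; exact (hrel 0).mem
    refine ⟨fun u => match u with | [] => s | (n :: t) => φ n t, ?_, ?_⟩
    · intro u v hu hv huv
      match u, v with
      | [], [] => exact List.prefix_rfl
      | [], (n :: t) =>
        have ht : t ∈ canonTree (canonIdx γ n) := mem_canonTree_cons h0 h1 hv
        exact (hpre n).trans (hφval n t ht).2.1
      | (n :: t), [] => exact absurd huv (by simp)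
      | (n :: t), (m :: t') =>
        obtain ⟨rfl, htt⟩ := List.cons_prefix_cons.mp huv
        exact hφmono n (mem_canonTree_cons h0 h1 hu) (mem_canonTree_cons h0 h1 hv) htt
    · intro t htT
      match t with
      | [] => exact ⟨hsS, List.prefix_rfl, by simp⟩
      | (n :: t) =>
        have ht : t ∈ canonTree (canonIdx γ n) := mem_canonTree_cons h0 h1 htT
        refine ⟨(hφval n t ht).1, (hpre n).trans (hφval n t ht).2.1, ?_⟩
        rw [(hφval n t ht).2.2, hlen n]
        simp [List.sum_cons]
        omega

lemma relAdm_iff_mem_iterDeriv {S : Set (List ℕ)} (hS : IsTree S) (hwf : WellFoundedTree S) :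
    ∀ γ : Ordinal.{0}, γ < omega1 → ∀ s : List ℕ,
      (RelAdm S γ s ↔ s ∈ iterDeriv Diie S γ) := by
  intro γ
  induction γ using Ordinal.induction with
  | _ γ ih =>
    intro hγ s
    have hwfD : ∀ b : Ordinal.{0}, WellFoundedTree (iterDeriv Diie S b) := fun b =>
      wf_subset ((isTree_iterDeriv b).2.trans (clTr_eq_self hS).le) hwf
    rcases Ordinal.zero_or_succ_or_isSuccLimit γ with h0 | ⟨b, hb⟩ | hlim
    · subst h0
      rw [relAdm_zero, iterDeriv_zero, clTr_eq_self hS]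
    · rw [← Ordinal.add_one_eq_succ] at hb
      subst hb
      have hne : b + 1 ≠ 0 := by
        intro h
        exact absurd (lt_of_lt_of_le (lt_add_one b) (le_of_eq h)) (not_lt_zero (a := b))
      have hbb : b < b + 1 := lt_add_one b
      have hbω : b < omega1 := lt_trans hbb hγ
      rw [relAdm_step hne hγ, iterDeriv_succ,
        diie_char (isTree_iterDeriv (S := S) b).1 (hwfD b)]
      constructor
      · intro h
        have h' : ∀ n : ℕ, ∃ s', s <+: s' ∧ s'.length = s.length + n ∧
            s' ∈ iterDeriv Diie S b := by
          intro n
          obtain ⟨s', hp, hl, hr⟩ := h n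
          rw [canonIdx_succ] at hr
          exact ⟨s', hp, hl, (ih b hbb hbω s').mp hr⟩
        constructor
        · obtain ⟨s', hp, hl, hr⟩ := h' 0
          have : s' = s := (hp.eq_of_length (by omega)).symm
          rwa [← this]
        · intro n
          obtain ⟨s', hp, hl, hr⟩ := h' n
          exact ⟨s', hr, hp, hl⟩
      · rintro ⟨hsD, h⟩
        intro n
        obtain ⟨t, htD, hp, hl⟩ := h n
        rw [canonIdx_succ]
        exact ⟨t, hp, hl, (ih b hbb hbω t).mpr htD⟩
    · have hne : γ ≠ 0 := hlim.ne_zero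
      rw [relAdm_step hne hγ, iterDeriv_limit _ _ hlim]
      constructor
      · intro h
        simp only [Set.mem_iInter]
        intro b hb
        obtain ⟨n, hn⟩ := canonIdx_limit_surj hlim hγ hb
        obtain ⟨s', hp, hl, hr⟩ := h n
        have hbγ : canonIdx γ n < γ := canonIdx_lt hne n
        have : s' ∈ iterDeriv Diie S b := by
          rw [← hn]
          exact (ih (canonIdx γ n) hbγ (lt_trans hbγ hγ) s').mp hr
        exact (isTree_iterDeriv (S := S) b).1 hp this
      · intro h
        simp only [Set.mem_iInter] at h
        intro n
        have hbγ : canonIdx γ n < γ := canonIdx_lt hne n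
        have hbn : canonIdx γ n + (n : Ordinal.{0}) < γ := add_nat_lt_limit hlim hbγ n
        obtain ⟨s', hp, hl, hr⟩ := shift_iterDeriv S n (canonIdx γ n) s (h _ hbn)
        exact ⟨s', hp, hl, (ih _ hbγ (lt_trans hbγ hγ) s').mpr hr⟩

lemma ordPrime_lt_omega1 {a : Ordinal.{0}} (h : a < omega1) : ordPrime a < omega1 := by
  have h2 : (a % Ordinal.omega0) / 2 ≤ a % Ordinal.omega0 := by
    calc (a % Ordinal.omega0) / 2 = 1 * ((a % Ordinal.omega0) / 2) := (one_mul _).symm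
      _ ≤ 2 * ((a % Ordinal.omega0) / 2) := mul_le_mul_left one_le_two _
      _ ≤ a % Ordinal.omega0 := Ordinal.mul_div_le _ _
  calc ordPrime a ≤ Ordinal.omega0 * (a / Ordinal.omega0) + a % Ordinal.omega0 :=
        add_le_add_right h2 _
    _ = a := Ordinal.div_add_mod a _
    _ < omega1 := h

section Glue

variable {Y : Type u} [TopologicalSpace Y]

lemma isTree_SCtree (C : List ℕ → Set Y) (hmono : IsSuslinScheme C) (y : Y) :
    IsTree (SCtree Y C y) :=
  fun _s _t hst ht => closure_mono (hmono hst) ht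

lemma wf_SCtree (C : List ℕ → Set Y) {X : Set Y}
    (hA : suslinOp (fun s => closure (C s)) = X) {y : Y} (hy : y ∉ X) :
    WellFoundedTree (SCtree Y C y) := by
  rintro ⟨σ, hσ⟩
  apply hy
  rw [← hA]
  exact Set.mem_iUnion.mpr ⟨σ, Set.mem_iInter.mpr fun k => hσ k⟩

lemma mem_RT_canonTree_iff (C : List ℕ → Set Y) (γ : Ordinal.{0}) (y : Y) :
    y ∈ RT (canonTree γ) (fun s => closure (C s)) ↔ RelAdm (SCtree Y C y) γ [] := by
  simp only [RT, Set.mem_setOf_eq]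
  constructor
  · rintro ⟨hy0, φ, ⟨hm, hl⟩, hv⟩
    exact ⟨φ, fun u v hu hv' huv => hm hu hv' huv,
      fun t ht => ⟨hv t ht, List.nil_prefix, by rw [hl t ht]; simp⟩⟩
  · rintro ⟨φ, hm, hv⟩
    have hnil := hv [] (nil_mem_canonTree γ)
    have hφnil : φ [] = [] := RelAdm.root_eq hv
    refine ⟨?_, φ, ⟨fun u v hu hv' huv => hm hu hv' huv,
      fun t ht => by rw [(hv t ht).2.2]; simp⟩, fun t ht => (hv t ht).1⟩
    have h0 : ([] : List ℕ) ∈ SCtree Y C y := by rw [← hφnil]; exact hnil.1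
    exact h0

lemma mem_RT_ci_iff (C : List ℕ → Set Y) (hmono : IsSuslinScheme C) (γ : Ordinal.{0})
    (i : ℕ) (y : Y) :
    y ∈ RT ({([] : List ℕ)} ∪ (List.cons i) '' canonTree γ) (fun s => closure (C s)) ↔
      ∃ s', s'.length = i ∧ RelAdm (SCtree Y C y) γ s' := by
  have hmem : ∀ {n : ℕ} {t : List ℕ},
      (n :: t) ∈ ({([] : List ℕ)} ∪ (List.cons i) '' canonTree γ) →
      n = i ∧ t ∈ canonTree γ := by
    rintro n t (h | ⟨t0, ht0, he⟩)
    · exact absurd h (by simp)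
    · injection he with h1 h2
      exact ⟨h1.symm, h2 ▸ ht0⟩
  simp only [RT, Set.mem_setOf_eq]
  constructor
  · rintro ⟨hy0, φ, ⟨hm, hl⟩, hv⟩
    have hiT : [i] ∈ ({([] : List ℕ)} ∪ (List.cons i) '' canonTree γ) :=
      Or.inr ⟨[], nil_mem_canonTree γ, rfl⟩
    have hleni : (φ [i]).length = i := by simpa using hl [i] hiT
    refine ⟨φ [i], hleni, fun t => φ (i :: t), ?_, ?_⟩
    · intro u v hu hv' huv
      exact hm (Or.inr ⟨u, hu, rfl⟩) (Or.inr ⟨v, hv', rfl⟩)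
        (List.cons_prefix_cons.mpr ⟨rfl, huv⟩)
    · intro t ht
      have htT : i :: t ∈ ({([] : List ℕ)} ∪ (List.cons i) '' canonTree γ) :=
        Or.inr ⟨t, ht, rfl⟩
      refine ⟨hv _ htT, hm hiT htT (List.cons_prefix_cons.mpr ⟨rfl, List.nil_prefix⟩), ?_⟩
      rw [hl _ htT, hleni]
      simp [List.sum_cons]
  · rintro ⟨s', hi, φ', hm', hv'⟩
    have hs'S : s' ∈ SCtree Y C y := RelAdm.mem ⟨φ', hm', hv'⟩
    have hnilS : ([] : List ℕ) ∈ SCtree Y C y :=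
      isTree_SCtree C hmono y List.nil_prefix hs'S
    refine ⟨hnilS, fun u => match u with | [] => ([] : List ℕ) | (_ :: t) => φ' t,
      ⟨?_, ?_⟩, ?_⟩
    · intro u v hu hv huv
      match u, v with
      | [], _ => exact List.nil_prefix
      | (n :: t), [] => exact absurd huv (by simp)
      | (n :: t), (m :: t') =>
        obtain ⟨rfl, htt⟩ := List.cons_prefix_cons.mp huv
        exact hm' (hmem hu).2 (hmem hv).2 htt
    · intro t ht
      match t with
      | [] => simp
      | (n :: t) =>
        obtain ⟨rfl, htc⟩ := hmem ht
        have := (hv' t htc).2.2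
        rw [this, hi]
        simp [List.sum_cons]
    · intro t ht
      match t with
      | [] => exact hnilS
      | (n :: t) =>
        obtain ⟨rfl, htc⟩ := hmem ht
        exact (hv' t htc).1

end Glue

end Aux
/-- Description of the remainder of a regular representation via the
derivative `D_iie`: for a Suslin scheme `C` on `X ⊆ Y` with `A(C̄^Y) = X` and `α < ω₁`:
(i) for even `α`, `R_α(C,Y) ∖ X` consists of the `y ∉ X` with
`D_iie^{α'}(S_C(y)) ≠ ∅`; (ii) for odd `α`, of the `y ∉ X` for which
`D_iie^{α'}(S_C(y))` strictly contains `{∅}`; (iii) for odd `α` and any `i`,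
`R_{T^c_{α,i}}(C,Y) ∖ X` consists of the `y ∉ X` for which `D_iie^{α'}(S_C(y))` contains
a sequence of length `i`. -/
theorem regular_representation_remainder (Y : Type u) [TopologicalSpace Y] (X : Set Y)
    (C : List ℕ → Set Y) (hmono : IsSuslinScheme C) (hsub : ∀ s, C s ⊆ X)
    (hcov : X ⊆ suslinOp C) (hA : suslinOp (fun s => closure (C s)) = X)
    (α : Ordinal.{0}) (hα : α < omega1) :
    (EvenOrd α →
      Ralpha α (fun s => closure (C s)) \ X =
        { y : Y | y ∉ X ∧ iterDeriv Diie (SCtree Y C y) (ordPrime α) ≠ ∅ }) ∧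
    (OddOrd α →
      Ralpha α (fun s => closure (C s)) \ X =
        { y : Y | y ∉ X ∧
            {([] : List ℕ)} ⊂ iterDeriv Diie (SCtree Y C y) (ordPrime α) }) ∧
    (OddOrd α → ∀ i : ℕ,
      RT (canonTreeCi α i) (fun s => closure (C s)) \ X =
        { y : Y | y ∉ X ∧
            ∃ s ∈ iterDeriv Diie (SCtree Y C y) (ordPrime α), s.length = i }) := by
  have hop : ordPrime α < omega1 := ordPrime_lt_omega1 hα
  have htree : ∀ y : Y, IsTree (SCtree Y C y) := isTree_SCtree C hmono
  have hiter_tree : ∀ y : Y, IsTree (iterDeriv Diie (SCtree Y C y) (ordPrime α)) :=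
    fun y => (isTree_iterDeriv _).1
  have key : ∀ y : Y, y ∉ X → ∀ s : List ℕ, (RelAdm (SCtree Y C y) (ordPrime α) s ↔
      s ∈ iterDeriv Diie (SCtree Y C y) (ordPrime α)) :=
    fun y hy => relAdm_iff_mem_iterDeriv (htree y) (wf_SCtree C hA hy) _ hop
  have part3 : ∀ i : ℕ, RT (canonTreeCi α i) (fun s => closure (C s)) \ X =
      { y : Y | y ∉ X ∧
        ∃ s ∈ iterDeriv Diie (SCtree Y C y) (ordPrime α), s.length = i } := by
    intro i
    unfold canonTreeCi
    ext y
    simp only [Set.mem_diff, Set.mem_setOf_eq]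
    constructor
    · rintro ⟨hyR, hyX⟩
      refine ⟨hyX, ?_⟩
      obtain ⟨s', hi, hrel⟩ := (mem_RT_ci_iff C hmono (ordPrime α) i y).mp hyR
      exact ⟨s', (key y hyX s').mp hrel, hi⟩
    · rintro ⟨hyX, s, hsD, hi⟩
      exact ⟨(mem_RT_ci_iff C hmono (ordPrime α) i y).mpr
        ⟨s, hi, (key y hyX s).mpr hsD⟩, hyX⟩
  refine ⟨?_, ?_, fun _ i => part3 i⟩
  · -- even case
    intro he
    have hct : Ralpha α (fun s => closure (C s)) =
        RT (canonTree (ordPrime α)) (fun s => closure (C s)) := by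
      unfold Ralpha canonTreeC
      rw [if_pos he]
    rw [hct]
    ext y
    simp only [Set.mem_diff, Set.mem_setOf_eq]
    constructor
    · rintro ⟨hyR, hyX⟩
      refine ⟨hyX, ?_⟩
      have h2 := (key y hyX []).mp ((mem_RT_canonTree_iff C (ordPrime α) y).mp hyR)
      exact Set.nonempty_iff_ne_empty.mp ⟨[], h2⟩
    · rintro ⟨hyX, hne⟩
      obtain ⟨t, ht⟩ := Set.nonempty_iff_ne_empty.mpr hne
      have h0 := hiter_tree y (List.nil_prefix (l := t)) ht
      exact ⟨(mem_RT_canonTree_iff C (ordPrime α) y).mpr ((key y hyX []).mpr h0), hyX⟩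
  · -- odd case
    intro ho
    have hnev : ¬ EvenOrd α := by
      intro he
      rw [OddOrd] at ho
      rw [EvenOrd] at he
      rw [he] at ho
      exact zero_ne_one ho
    have hct : Ralpha α (fun s => closure (C s)) =
        RT (canonTreeCi α 1) (fun s => closure (C s)) := by
      unfold Ralpha canonTreeC canonTreeCi
      rw [if_neg hnev]
    rw [hct, part3 1]
    ext y
    simp only [Set.mem_setOf_eq]
    constructor
    · rintro ⟨hyX, s, hsD, hlen1⟩
      refine ⟨hyX, ?_⟩
      rw [Set.ssubset_iff_subset_ne]
      constructor
      · intro u hu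
        rw [Set.mem_singleton_iff] at hu
        subst hu
        exact hiter_tree y (List.nil_prefix (l := s)) hsD
      · intro heq
        have hs : s ∈ ({([] : List ℕ)} : Set (List ℕ)) := heq ▸ hsD
        rw [Set.mem_singleton_iff] at hs
        rw [hs] at hlen1
        simp at hlen1
    · rintro ⟨hyX, hss⟩
      refine ⟨hyX, ?_⟩
      obtain ⟨s, hsD, hs⟩ := Set.exists_of_ssubset hss
      have hsne : s ≠ [] := by
        intro h
        exact hs (by rw [h]; exact rfl)
      have hpos : 1 ≤ s.length := List.length_pos_iff.mpr hsne
      refine ⟨s.take 1, hiter_tree y (List.take_prefix _ _) hsD, ?_⟩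
      simp [List.length_take]
      omega


end FBorelPaper
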